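/- If λ satisfies e^(-λ(r)) = 1 + B/r and ν' = -λ', then e^(ν(r)) = (1/A)(1 + B/r) for some constant A > 0, and this pair (ν, λ) satisfies the third field equation 2ν' - 2λ' + 2rν'' + r(ν')² - rν'λ' = 0. -/

import Mathlib

open Real Set

theorem stmt_17 (B a b : ℝ) (lam ν : ℝ → ℝ) (ha : 0 < a) (hab : a < b)
    (hposB : ∀ r ∈ Ioo a b, 0 < 1 + B / r)
    (hlam : ∀ r ∈ Ioo a b, Real.exp (-lam r) = 1 + B / r)
    (hν2 : ContDiffOn ℝ 2 ν (Ioo a b))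
    (hlam2 : ContDiffOn ℝ 2 lam (Ioo a b))
    (hprime : ∀ r ∈ Ioo a b, deriv ν r = -deriv lam r) :
    (∃ A : ℝ, 0 < A ∧ ∀ r ∈ Ioo a b, Real.exp (ν r) = (1 / A) * (1 + B / r)) ∧
    ∀ r ∈ Ioo a b,
      2 * deriv ν r - 2 * deriv lam r + 2 * r * deriv (deriv ν) r
        + r * (deriv ν r) ^ 2 - r * deriv ν r * deriv lam r = 0 := by
  have hopen : IsOpen (Ioo a b) := isOpen_Ioo
  have hr0 : ∀ r ∈ Ioo a b, 0 < r := fun r hr => ha.trans hr.1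
  -- basic facts
  have hne : ∀ r ∈ Ioo a b, r ^ 2 + B * r ≠ 0 := by
    intro r hr
    have h1 := hposB r hr
    have h2 := hr0 r hr
    have : r ^ 2 + B * r = r ^ 2 * (1 + B / r) := by field_simp
    rw [this]
    positivity
  -- deriv lam formula
  have hdlam : ∀ r ∈ Ioo a b, deriv lam r = B / (r ^ 2 + B * r) := by
    intro r hr
    have heq : lam =ᶠ[nhds r] fun x => -Real.log (1 + B / x) := by
      filter_upwards [hopen.mem_nhds hr] with x hx
      have := hlam x hx
      have : Real.log (Real.exp (-lam x)) = Real.log (1 + B / x) := by rw [this]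
      rw [Real.log_exp] at this
      linarith
    rw [heq.deriv_eq]
    have hx0 : r ≠ 0 := (hr0 r hr).ne'
    have hd1 : HasDerivAt (fun x : ℝ => 1 + B / x) (-(B / r ^ 2)) r := by
      have := ((hasDerivAt_inv hx0).const_mul B).const_add 1
      have e : (fun x : ℝ => 1 + B / x) = fun x => 1 + B * x⁻¹ := by ext x; ring
      rw [e]; exact this.congr_deriv (by ring)
    have hd2 : HasDerivAt (fun x : ℝ => -Real.log (1 + B / x))
        (-(-(B / r ^ 2) / (1 + B / r))) r := (hd1.log (hposB r hr).ne').neg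
    rw [hd2.deriv]
    have h1 := hposB r hr
    rw [neg_div, neg_neg, div_div]
    congr 1
    field_simp
  -- deriv nu formula
  have hdν : ∀ r ∈ Ioo a b, deriv ν r = -(B / (r ^ 2 + B * r)) := by
    intro r hr
    rw [hprime r hr, hdlam r hr]
  -- second deriv
  have hddν : ∀ r ∈ Ioo a b, deriv (deriv ν) r = B * (2 * r + B) / (r ^ 2 + B * r) ^ 2 := by
    intro r hr
    have heq : deriv ν =ᶠ[nhds r] fun x => -(B / (x ^ 2 + B * x)) := by
      filter_upwards [hopen.mem_nhds hr] with x hx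
      exact hdν x hx
    rw [heq.deriv_eq]
    have hd1 : HasDerivAt (fun x : ℝ => x ^ 2 + B * x) (2 * r + B) r := by
      have := ((hasDerivAt_pow 2 r).add ((hasDerivAt_id' (x := r)).const_mul B))
      exact this.congr_deriv (by norm_num)
    have hd2 : HasDerivAt (fun x : ℝ => -(B / (x ^ 2 + B * x)))
        (-((0 * (r ^ 2 + B * r) - B * (2 * r + B)) / (r ^ 2 + B * r) ^ 2)) r :=
      (((hasDerivAt_const r B).div hd1 (hne r hr))).neg
    rw [hd2.deriv]
    field_simp
    ring
  constructor
  · -- ν + lam constant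
    set r0 := (a + b) / 2 with hr0def
    have hr0mem : r0 ∈ Ioo a b := ⟨by linarith, by linarith⟩
    have hconst : ∀ r ∈ Ioo a b, ν r + lam r = ν r0 + lam r0 := by
      intro r hr
      have hdiff : DifferentiableOn ℝ (fun x => ν x + lam x) (Ioo a b) :=
        (hν2.differentiableOn (by norm_num)).add (hlam2.differentiableOn (by norm_num))
      refine (convex_Ioo a b).is_const_of_fderivWithin_eq_zero hdiff ?_ hr hr0mem
      intro x hx
      have hdν' : DifferentiableAt ℝ ν x :=
        (hν2.differentiableOn (by norm_num)).differentiableAt (hopen.mem_nhds hx)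
      have hdl' : DifferentiableAt ℝ lam x :=
        (hlam2.differentiableOn (by norm_num)).differentiableAt (hopen.mem_nhds hx)
      rw [fderivWithin_of_isOpen hopen hx]
      have : deriv (fun x => ν x + lam x) x = 0 := by
        rw [deriv_fun_add hdν' hdl', hprime x hx]; ring
      ext
      simp only [ContinuousLinearMap.zero_apply]
      rw [← toSpanSingleton_deriv]
      simp [this]
    refine ⟨Real.exp (-(ν r0 + lam r0)), Real.exp_pos _, fun r hr => ?_⟩
    have h1 := hlam r hr
    have h2 := hconst r hr
    rw [← h1, one_div, ← Real.exp_neg, ← Real.exp_add, Real.exp_eq_exp]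
    linarith
  · intro r hr
    rw [hdν r hr, hdlam r hr, hddν r hr]
    have h := hne r hr
    field_simp
    ring
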